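/- Let a, b > 0 be real numbers and define g : ℝ → ℝ by g(x) = sinc(ax)·sinc(bx)³, where sinc(x) = sin(x)/x for x ≠ 0 and sinc(0) = 1. Then g is Lipschitz with constant (a+3b)/2: for all real x, y, |g(x) − g(y)| ≤ ((a+3b)/2)·|x − y|. -/

import Mathlib

noncomputable def sinc (x : ℝ) : ℝ := if x = 0 then 1 else Real.sin x / x

open Real hiding sinc
open scoped NNReal

private lemma nonneg_of_deriv {f f' : ℝ → ℝ} (hf0 : f 0 = 0)
    (hd : ∀ x, HasDerivAt f (f' x) x) (hnn : ∀ x, 0 ≤ x → 0 ≤ f' x)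
    {x : ℝ} (hx : 0 ≤ x) : 0 ≤ f x := by
  have hmono : MonotoneOn f (Set.Ici (0 : ℝ)) := by
    apply monotoneOn_of_deriv_nonneg (convex_Ici 0)
    · exact (Differentiable.continuous (fun z => (hd z).differentiableAt)).continuousOn
    · intro z hz
      exact ((hd z).differentiableAt).differentiableWithinAt
    · intro z hz
      rw [interior_Ici] at hz
      rw [(hd z).deriv]
      exact hnn z hz.le
  have := hmono (Set.self_mem_Ici) hx hx
  rwa [hf0] at this

private lemma sub_sin_le_cube {x : ℝ} (hx : 0 ≤ x) : x - Real.sin x ≤ x ^ 3 / 6 := by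
  have key := nonneg_of_deriv (f := fun z : ℝ => z ^ 3 / 6 - z + Real.sin z)
    (f' := fun z => z ^ 2 / 2 - 1 + Real.cos z)
    (by simp)
    (fun z => by
      have h1 : HasDerivAt (fun z : ℝ => z ^ 3 / 6) (z ^ 2 / 2) z := by
        have := (hasDerivAt_pow 3 z).div_const 6
        exact this.congr_deriv (by ring)
      have := (h1.sub (hasDerivAt_id z)).add (Real.hasDerivAt_sin z)
      exact this)
    (fun z hz => by
      have := Real.one_sub_sq_div_two_le_cos (x := z)
      linarith)
    hx
  linarith

private lemma abs_sin_sub_id_le_cube (x : ℝ) : |Real.sin x - x| ≤ |x| ^ 3 / 6 := by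
  rcases le_or_gt 0 x with hx | hx
  · rw [abs_of_nonneg hx]
    have h1 := sub_sin_le_cube hx
    have h2 := Real.sin_le hx
    rw [abs_le]
    constructor <;> nlinarith [pow_nonneg hx 3]
  · have hx' : 0 ≤ -x := by linarith
    have h1 := sub_sin_le_cube hx'
    have h2 := Real.sin_le hx'
    rw [Real.sin_neg] at h1 h2
    rw [abs_of_neg hx]
    rw [abs_le]
    constructor <;> nlinarith [pow_nonneg hx' 3]

private lemma abs_sin_sub_mul_cos {x : ℝ} (hx : 0 ≤ x) :
    |Real.sin x - x * Real.cos x| ≤ x ^ 2 / 2 := by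
  have hsq : ∀ z : ℝ, HasDerivAt (fun z : ℝ => z ^ 2 / 2) z z := fun z => by
    have := (hasDerivAt_pow 2 z).div_const 2
    exact this.congr_deriv (by ring)
  have hmc : ∀ z : ℝ, HasDerivAt (fun z : ℝ => z * Real.cos z)
      (Real.cos z - z * Real.sin z) z := fun z => by
    have := (hasDerivAt_id z).mul (Real.hasDerivAt_cos z)
    exact this.congr_deriv (by simp only [id_eq]; ring)
  have key1 := nonneg_of_deriv (f := fun z : ℝ => z ^ 2 / 2 - Real.sin z + z * Real.cos z)
    (f' := fun z => z - z * Real.sin z)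
    (by simp)
    (fun z => by
      have := ((hsq z).sub (Real.hasDerivAt_sin z)).add (hmc z)
      exact this.congr_deriv (by ring))
    (fun z hz => by
      have := Real.sin_le_one z
      nlinarith)
    hx
  have key2 := nonneg_of_deriv (f := fun z : ℝ => z ^ 2 / 2 + Real.sin z - z * Real.cos z)
    (f' := fun z => z + z * Real.sin z)
    (by simp)
    (fun z => by
      have := ((hsq z).add (Real.hasDerivAt_sin z)).sub (hmc z)
      exact this.congr_deriv (by ring))
    (fun z hz => by
      have := Real.neg_one_le_sin z
      nlinarith)
    hx
  rw [abs_le]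
  constructor <;> linarith

private lemma abs_sin_sub_mul_cos' (x : ℝ) :
    |Real.sin x - x * Real.cos x| ≤ x ^ 2 / 2 := by
  rcases le_or_gt 0 x with hx | hx
  · exact abs_sin_sub_mul_cos hx
  · have hx' : 0 ≤ -x := by linarith
    have := abs_sin_sub_mul_cos hx'
    rw [Real.sin_neg, Real.cos_neg] at this
    calc |Real.sin x - x * Real.cos x| = |-Real.sin x - -x * Real.cos x| := by
          rw [← abs_neg]; ring_nf
      _ ≤ (-x) ^ 2 / 2 := this
      _ = x ^ 2 / 2 := by ring

private lemma sinc_hasDerivAt_ne {x : ℝ} (hx : x ≠ 0) :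
    HasDerivAt sinc ((x * Real.cos x - Real.sin x) / x ^ 2) x := by
  have h : HasDerivAt (fun z : ℝ => Real.sin z / z)
      ((Real.cos x * x - Real.sin x * 1) / x ^ 2) x :=
    (Real.hasDerivAt_sin x).div (hasDerivAt_id x) hx
  have heq : sinc =ᶠ[nhds x] fun z : ℝ => Real.sin z / z := by
    filter_upwards [isOpen_ne.mem_nhds hx] with z hz
    simp [sinc, hz]
  have := h.congr_of_eventuallyEq heq
  exact this.congr_deriv (by ring)

private lemma sinc_hasDerivAt_zero : HasDerivAt sinc 0 0 := by
  rw [hasDerivAt_iff_tendsto_slope]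
  apply squeeze_zero_norm' (a := fun z => |z| / 6)
  · filter_upwards [self_mem_nhdsWithin] with z hz
    have hz' : (z : ℝ) ≠ 0 := hz
    have : slope sinc 0 z = (Real.sin z - z) / z ^ 2 := by
      rw [slope_def_field]
      simp only [sinc, if_pos rfl, if_neg hz', sub_zero, ↓reduceIte]
      rw [div_eq_div_iff hz' (pow_ne_zero 2 hz')]
      field_simp
    rw [this]
    rw [Real.norm_eq_abs, abs_div]
    have h1 := abs_sin_sub_id_le_cube z
    have h2 : |z ^ 2| = |z| ^ 2 := by rw [abs_pow]
    rw [h2]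
    rw [div_le_div_iff₀ (by positivity) (by norm_num)]
    have hz3 : |z| ^ 3 = |z| ^ 2 * |z| := by ring
    nlinarith [abs_nonneg z, sq_abs z]
  · have : Filter.Tendsto (fun z : ℝ => |z| / 6) (nhds 0) (nhds 0) := by
      have := (continuous_abs.tendsto (0 : ℝ)).div_const 6
      simpa using this
    exact this.mono_left nhdsWithin_le_nhds

private lemma sinc_differentiable : Differentiable ℝ sinc := by
  intro x
  rcases eq_or_ne x 0 with rfl | hx
  · exact sinc_hasDerivAt_zero.differentiableAt
  · exact (sinc_hasDerivAt_ne hx).differentiableAt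

private lemma sinc_deriv_bound (x : ℝ) : ‖deriv sinc x‖ ≤ 1 / 2 := by
  rcases eq_or_ne x 0 with rfl | hx
  · rw [sinc_hasDerivAt_zero.deriv]
    norm_num
  · rw [(sinc_hasDerivAt_ne hx).deriv]
    rw [Real.norm_eq_abs, abs_div]
    have h1 : |x * Real.cos x - Real.sin x| ≤ x ^ 2 / 2 := by
      have := abs_sin_sub_mul_cos' x
      rwa [abs_sub_comm] at this
    have h2 : |x ^ 2| = x ^ 2 := abs_of_pos (by positivity)
    rw [h2, div_le_div_iff₀ (by positivity) (by norm_num)]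
    nlinarith

private lemma sinc_lipschitz (u v : ℝ) : |sinc u - sinc v| ≤ |u - v| / 2 := by
  have h : LipschitzWith (1 / 2 : ℝ≥0) sinc := by
    apply lipschitzWith_of_nnnorm_deriv_le sinc_differentiable
    intro x
    have := sinc_deriv_bound x
    rw [← NNReal.coe_le_coe]
    push_cast
    simpa using this
  have := h.dist_le_mul u v
  rw [Real.dist_eq, Real.dist_eq] at this
  push_cast at this
  linarith

private lemma sinc_abs_le_one (x : ℝ) : |sinc x| ≤ 1 := by
  rcases eq_or_ne x 0 with rfl | hx
  · simp [sinc]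
  · simp only [sinc, if_neg hx]
    rw [abs_div]
    rw [div_le_one (abs_pos.mpr hx)]
    exact Real.abs_sin_le_abs

/-- For `a, b > 0`, the function `g(x) = sinc(ax)·sinc(bx)³` is Lipschitz with
constant `(a+3b)/2`. -/
theorem sinc_product_lipschitz (a b : ℝ) (ha : 0 < a) (hb : 0 < b) (x y : ℝ) :
    |sinc (a * x) * (sinc (b * x)) ^ 3 - sinc (a * y) * (sinc (b * y)) ^ 3|
      ≤ ((a + 3 * b) / 2) * |x - y| := by
  set s := sinc (a * x)
  set t := sinc (a * y)
  set p := sinc (b * x)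
  set q := sinc (b * y)
  have hs : |s| ≤ 1 := sinc_abs_le_one _
  have ht : |t| ≤ 1 := sinc_abs_le_one _
  have hp : |p| ≤ 1 := sinc_abs_le_one _
  have hq : |q| ≤ 1 := sinc_abs_le_one _
  have hst : |s - t| ≤ a * |x - y| / 2 := by
    have := sinc_lipschitz (a * x) (a * y)
    have h2 : |a * x - a * y| = a * |x - y| := by
      rw [← mul_sub, abs_mul, abs_of_pos ha]
    linarith [this, h2.le, h2.ge]
  have hpq : |p - q| ≤ b * |x - y| / 2 := by
    have := sinc_lipschitz (b * x) (b * y)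
    have h2 : |b * x - b * y| = b * |x - y| := by
      rw [← mul_sub, abs_mul, abs_of_pos hb]
    linarith [this, h2.le, h2.ge]
  have key : s * p ^ 3 - t * q ^ 3 = s * (p ^ 3 - q ^ 3) + q ^ 3 * (s - t) := by ring
  have hcube : |p ^ 3 - q ^ 3| ≤ 3 * |p - q| := by
    have : p ^ 3 - q ^ 3 = (p - q) * (p ^ 2 + p * q + q ^ 2) := by ring
    rw [this, abs_mul]
    have hb2 : |p ^ 2 + p * q + q ^ 2| ≤ 3 := by
      calc |p ^ 2 + p * q + q ^ 2| ≤ |p| ^ 2 + |p| * |q| + |q| ^ 2 := by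
            have := abs_add_le (p ^ 2 + p * q) (q ^ 2)
            have := abs_add_le (p ^ 2) (p * q)
            rw [abs_le]
            constructor <;> nlinarith [abs_nonneg p, abs_nonneg q, sq_abs p, sq_abs q,
              abs_mul p q, neg_abs_le (p*q), le_abs_self (p*q), neg_abs_le (p^2),
              le_abs_self (p^2), neg_abs_le (q^2), le_abs_self (q^2)]
        _ ≤ 3 := by nlinarith [abs_nonneg p, abs_nonneg q]
    calc |p - q| * |p ^ 2 + p * q + q ^ 2| ≤ |p - q| * 3 :=
          mul_le_mul_of_nonneg_left hb2 (abs_nonneg _)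
      _ = 3 * |p - q| := by ring
  calc |s * p ^ 3 - t * q ^ 3| = |s * (p ^ 3 - q ^ 3) + q ^ 3 * (s - t)| := by rw [key]
    _ ≤ |s * (p ^ 3 - q ^ 3)| + |q ^ 3 * (s - t)| := abs_add_le _ _
    _ = |s| * |p ^ 3 - q ^ 3| + |q| ^ 3 * |s - t| := by
        rw [abs_mul, abs_mul, abs_pow]
    _ ≤ 1 * (3 * (b * |x - y| / 2)) + 1 * (a * |x - y| / 2) := by
        have h1 : |s| * |p ^ 3 - q ^ 3| ≤ 1 * (3 * (b * |x - y| / 2)) := by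
          have := hcube.trans (by linarith : 3 * |p - q| ≤ 3 * (b * |x - y| / 2))
          nlinarith [abs_nonneg (p ^ 3 - q ^ 3), abs_nonneg s]
        have h2 : |q| ^ 3 * |s - t| ≤ 1 * (a * |x - y| / 2) := by
          have hq3 : |q| ^ 3 ≤ 1 := pow_le_one₀ (abs_nonneg q) hq
          nlinarith [abs_nonneg (s - t), pow_nonneg (abs_nonneg q) 3]
        linarith
    _ = ((a + 3 * b) / 2) * |x - y| := by ring
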